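/- Fix a real parameter g with −2 < g < 2 and set h = √(1 − g²/4), G = g/h. Then for every (b₀,q₀) with q₀ > 0, the function b ↦ f(b,q₀) is differentiable at b₀ with derivative ∂f/∂b = −q₀·h / B(b₀,q₀). -/

import Mathlib

noncomputable def finsH (g : ℝ) : ℝ := Real.sqrt (1 - g ^ 2 / 4)

noncomputable def finsG (g : ℝ) : ℝ := g / finsH g

/-- The characteristic quadratic form `B(b,q) = b² + g·q·b + q²`. -/
noncomputable def finsB (g b q : ℝ) : ℝ := b ^ 2 + g * q * b + q ^ 2

/-- `L(b,q) = q + (g/2)·b`. -/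
noncomputable def finsL (g b q : ℝ) : ℝ := q + (g / 2) * b

/-- The piecewise-defined Finsleroid function `f` on the half-plane `q > 0`. -/
noncomputable def finsF (g b q : ℝ) : ℝ :=
  if 0 < b then -Real.arctan (finsG g / 2) + Real.arctan (finsL g b q / (finsH g * b))
  else if b < 0 then
    Real.pi - Real.arctan (finsG g / 2) + Real.arctan (finsL g b q / (finsH g * b))
  else Real.pi / 2 - Real.arctan (finsG g / 2)

/-- The Finsleroid-regular metric function `K(b,q) = √(B(b,q))·exp(−(G/2)·f(b,q))`. -/
noncomputable def finsK (g b q : ℝ) : ℝ :=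
  Real.sqrt (finsB g b q) * Real.exp (-(finsG g / 2) * finsF g b q)

lemma finsH_sq {g : ℝ} (hg1 : -2 < g) (hg2 : g < 2) : finsH g ^ 2 = 1 - g ^ 2 / 4 := by
  rw [finsH, Real.sq_sqrt]; nlinarith

lemma finsH_pos {g : ℝ} (hg1 : -2 < g) (hg2 : g < 2) : 0 < finsH g := by
  rw [finsH]; apply Real.sqrt_pos.2; nlinarith

lemma finsB_pos {g : ℝ} (hg1 : -2 < g) (hg2 : g < 2) {b q : ℝ} (hq : 0 < q) :
    0 < finsB g b q := by
  have h4 : 0 < 4 - g ^ 2 := by nlinarith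
  rw [finsB]
  nlinarith [sq_nonneg (2 * b + g * q), mul_pos h4 (mul_pos hq hq)]

lemma fins_key {g : ℝ} (hg1 : -2 < g) (hg2 : g < 2) (b q : ℝ) :
    (finsH g) ^ 2 * b ^ 2 + (finsL g b q) ^ 2 = finsB g b q := by
  have hs := finsH_sq hg1 hg2
  rw [finsL, finsB]; nlinarith [hs]

lemma fins_deriv_ne (g : ℝ) (hg1 : -2 < g) (hg2 : g < 2)
    (b₀ q₀ : ℝ) (hb : b₀ ≠ 0) (hq : 0 < q₀) :
    HasDerivAt (fun b : ℝ => Real.arctan (finsL g b q₀ / (finsH g * b)))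
      (-(q₀ * finsH g) / finsB g b₀ q₀) b₀ := by
  have hh := finsH_pos hg1 hg2
  have hB := finsB_pos hg1 hg2 (b := b₀) hq
  have key := fins_key hg1 hg2 b₀ q₀
  have h1 : HasDerivAt (fun b : ℝ => finsL g b q₀) (g / 2) b₀ := by
    simpa [finsL] using ((hasDerivAt_id b₀).const_mul (g / 2)).const_add q₀
  have h2 : HasDerivAt (fun b : ℝ => finsH g * b) (finsH g) b₀ := by
    simpa using (hasDerivAt_id b₀).const_mul (finsH g)
  have hne : finsH g * b₀ ≠ 0 := mul_ne_zero hh.ne' hb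
  have hd := (h1.div h2 hne).arctan
  refine hd.congr_deriv ?_
  symm
  simp only [Pi.div_apply]
  rw [finsL] at key ⊢
  field_simp
  linear_combination (-(4 * q₀)) * key

theorem finsleroid_f_deriv_b (g : ℝ) (hg1 : -2 < g) (hg2 : g < 2)
    (b₀ q₀ : ℝ) (hq : 0 < q₀) :
    HasDerivAt (fun b : ℝ => finsF g b q₀)
      (-(q₀ * finsH g) / finsB g b₀ q₀) b₀ := by
  have hh := finsH_pos hg1 hg2
  rcases lt_trichotomy b₀ 0 with hb | hb | hb
  · -- b₀ < 0
    have := ((fins_deriv_ne g hg1 hg2 b₀ q₀ hb.ne hq).const_add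
      (Real.pi - Real.arctan (finsG g / 2)))
    apply this.congr_of_eventuallyEq
    filter_upwards [eventually_lt_nhds hb] with b hb'
    rw [finsF, if_neg (not_lt.2 hb'.le), if_pos hb']
  · -- b₀ = 0
    subst hb
    have hB : finsB g 0 q₀ = q₀ ^ 2 := by simp [finsB]
    have h1 : HasDerivAt (fun b : ℝ => finsH g * b) (finsH g) (0 : ℝ) := by
      simpa using (hasDerivAt_id (0 : ℝ)).const_mul (finsH g)
    have h2 : HasDerivAt (fun b : ℝ => finsL g b q₀) (g / 2) (0 : ℝ) := by
      simpa [finsL] using ((hasDerivAt_id (0 : ℝ)).const_mul (g / 2)).const_add q₀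
    have hL0 : finsL g 0 q₀ = q₀ := by simp [finsL]
    have hne : finsL g 0 q₀ ≠ 0 := by rw [hL0]; exact hq.ne'
    have hD : HasDerivAt
        (fun b : ℝ => Real.pi / 2 - Real.arctan (finsG g / 2)
          + -Real.arctan (finsH g * b / finsL g b q₀))
        (-(q₀ * finsH g) / finsB g 0 q₀) 0 := by
      have hd := ((h1.div h2 hne).arctan).neg.const_add
        (Real.pi / 2 - Real.arctan (finsG g / 2))
      refine hd.congr_deriv ?_
      symm
      simp only [Pi.div_apply]
      rw [hB, hL0]
      field_simp
      ring
    apply hD.congr_of_eventuallyEq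
    have hev : ∀ᶠ b in nhds (0 : ℝ), 0 < finsL g b q₀ := by
      have hmem : Set.Ioo (-q₀) q₀ ∈ nhds (0 : ℝ) := Ioo_mem_nhds (by linarith) hq
      filter_upwards [hmem] with b hbm
      rw [finsL]
      rcases le_or_gt 0 b with h | h
      · nlinarith [mul_nonneg (by linarith : (0:ℝ) ≤ g + 2) h, hbm.2]
      · nlinarith [mul_pos (by linarith : (0:ℝ) < 2 - g) (neg_pos.2 h), hbm.1]
    filter_upwards [hev] with b hLb
    rcases lt_trichotomy b 0 with h | h | h
    · have hx : finsH g * b / finsL g b q₀ < 0 :=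
        div_neg_of_neg_of_pos (mul_neg_of_pos_of_neg hh h) hLb
      have harc := Real.arctan_inv_of_neg hx
      rw [inv_div] at harc
      rw [finsF, if_neg (not_lt.2 h.le), if_pos h, harc]
      ring
    · subst h
      simp [finsF]
    · have hx : 0 < finsH g * b / finsL g b q₀ := div_pos (mul_pos hh h) hLb
      have harc := Real.arctan_inv_of_pos hx
      rw [inv_div] at harc
      rw [finsF, if_pos h, harc]
      ring
  · -- 0 < b₀
    have := ((fins_deriv_ne g hg1 hg2 b₀ q₀ hb.ne' hq).const_add
      (-Real.arctan (finsG g / 2)))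
    apply this.congr_of_eventuallyEq
    filter_upwards [eventually_gt_nhds hb] with b hb'
    rw [finsF, if_pos hb']
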